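/- Let h = (α β; β̄ ᾱ) ∈ SU(1,1) and a = diag(λ, λ̄) with |λ| = 1 and λ of infinite order in the circle group. Then tr(h·aⁿ) = 2·Re(α·λⁿ), and if α ≠ 0 there exists n ∈ ℕ such that |tr(h·aⁿ)| < 2 (i.e., h·aⁿ is elliptic). -/

import Mathlib

open Matrix Complex

-- coe of zpow on Circle
lemma circle_coe_zpow (z : Circle) (m : ℤ) : ((z ^ m : Circle) : ℂ) = (z : ℂ) ^ m := by
  have hp : ∀ n : ℕ, ((z ^ n : Circle) : ℂ) = (z : ℂ) ^ n := fun n => map_pow Circle.coeHom z n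
  cases m with
  | ofNat n => simpa [zpow_natCast] using hp n
  | negSucc n => rw [zpow_negSucc, Circle.coe_inv, hp, zpow_negSucc]

lemma exp_close (x y : ℝ) (hxy : |x - y| ≤ 1) :
    ‖Complex.exp (x * I) - Complex.exp (y * I)‖ ≤ 2 * |x - y| := by
  have h1 : Complex.exp (x * I) - Complex.exp (y * I)
      = Complex.exp (y * I) * (Complex.exp (((x - y : ℝ)) * I) - 1) := by
    rw [mul_sub, mul_one, ← Complex.exp_add]
    push_cast
    ring_nf
  rw [h1, norm_mul, Complex.norm_exp_ofReal_mul_I, one_mul]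
  have h2 : ‖((x - y : ℝ) : ℂ) * I‖ ≤ 1 := by
    rw [norm_mul, Complex.norm_I, mul_one, Complex.norm_real, Real.norm_eq_abs]
    exact hxy
  calc ‖Complex.exp (((x - y : ℝ)) * I) - 1‖
      ≤ 2 * ‖((x - y : ℝ) : ℂ) * I‖ := Complex.norm_exp_sub_one_le h2
    _ = 2 * |x - y| := by
        rw [norm_mul, Complex.norm_I, mul_one, Complex.norm_real, Real.norm_eq_abs]

theorem stmt13 (α β l : ℂ) (hSU : Complex.normSq α - Complex.normSq β = 1)
    (hl : ‖l‖ = 1) (hinf : ∀ n : ℕ, 0 < n → l ^ n ≠ 1)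
    (h : Matrix (Fin 2) (Fin 2) ℂ)
    (hh : h = !![α, β; (starRingEnd ℂ) β, (starRingEnd ℂ) α])
    (a : Matrix (Fin 2) (Fin 2) ℂ)
    (ha : a = Matrix.diagonal ![l, (starRingEnd ℂ) l]) :
    (∀ n : ℕ, Matrix.trace (h * a ^ n) = (2 * (α * l ^ n).re : ℂ)) ∧
    (α ≠ 0 → ∃ n : ℕ, ‖Matrix.trace (h * a ^ n)‖ < 2) := by
  subst hh ha
  have habs : ‖l‖ = 1 := by exact hl
  have tr : ∀ n : ℕ, Matrix.trace
      (!![α, β; (starRingEnd ℂ) β, (starRingEnd ℂ) α] *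
        (Matrix.diagonal ![l, (starRingEnd ℂ) l]) ^ n) = (2 * (α * l ^ n).re : ℂ) := by
    intro n
    rw [Matrix.diagonal_pow, Matrix.trace_fin_two]
    have hc : (starRingEnd ℂ) α * ((starRingEnd ℂ) l) ^ n = (starRingEnd ℂ) (α * l ^ n) := by
      rw [_root_.map_mul, map_pow]
    simp only [Matrix.mul_apply, Fin.sum_univ_two, Matrix.diagonal_apply_eq,
      Matrix.diagonal_apply_ne, Matrix.cons_val', Matrix.cons_val_zero, Matrix.cons_val_one,
      Matrix.head_cons, Matrix.head_fin_const, Matrix.empty_val', Matrix.cons_val_fin_one,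
      Matrix.of_apply]
    have d10 : Matrix.diagonal (![l, (starRingEnd ℂ) l] ^ n) 1 0 = 0 :=
      Matrix.diagonal_apply_ne _ (by decide)
    have d01 : Matrix.diagonal (![l, (starRingEnd ℂ) l] ^ n) 0 1 = 0 :=
      Matrix.diagonal_apply_ne _ (by decide)
    rw [d10, d01, mul_zero, mul_zero, add_zero, zero_add]
    simp only [Pi.pow_apply, Matrix.cons_val_zero, Matrix.cons_val_one, Matrix.head_cons]
    rw [hc, Complex.add_conj]
    push_cast
    ring
  refine ⟨tr, fun hα => ?_⟩
  set r := ‖α‖ with hr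
  have hr0 : 0 < r := norm_pos_iff.mpr hα
  -- target point on the circle, orthogonal direction to α
  set t : ℂ := Complex.I * (starRingEnd ℂ) α / r with htdef
  have htabs : ‖t‖ = 1 := by
    rw [htdef, norm_div, norm_mul, Complex.norm_I, Complex.norm_conj, Complex.norm_real, Real.norm_eq_abs,
      abs_of_pos hr0, one_mul]
    exact div_self hr0.ne'
  have htre : (α * t).re = 0 := by
    have hmul : α * t = Complex.I * ((Complex.normSq α / r : ℝ) : ℂ) := by
      rw [htdef]
      push_cast
      rw [← Complex.mul_conj]
      ring
    rw [hmul]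
    simp [Complex.mul_re]
  -- write l and t as exponentials
  set θ := Complex.arg l with hθ
  have hexpθ : Complex.exp (θ * Complex.I) = l := by
    have h0 := Complex.norm_mul_exp_arg_mul_I l
    rwa [habs, Complex.ofReal_one, one_mul] at h0
  set τ := Complex.arg t with hτ
  have hexpτ : Complex.exp (τ * Complex.I) = t := by
    have h0 := Complex.norm_mul_exp_arg_mul_I t
    rwa [htabs, Complex.ofReal_one, one_mul] at h0
  -- the subgroup generated by θ and 2π is dense
  set S : AddSubgroup ℝ := AddSubgroup.closure {θ, 2 * Real.pi} with hS
  have hdense : Dense (S : Set ℝ) := by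
    rcases AddSubgroup.dense_or_cyclic S with hd | ⟨g, hg⟩
    · exact hd
    · exfalso
      have hθS : θ ∈ S := AddSubgroup.subset_closure (by simp)
      have hπS : 2 * Real.pi ∈ S := AddSubgroup.subset_closure (by simp)
      rw [hg, AddSubgroup.mem_closure_singleton] at hθS hπS
      obtain ⟨mi, hm⟩ := hθS
      obtain ⟨k, hk⟩ := hπS
      have hk0 : k ≠ 0 := by
        rintro rfl
        rw [zero_zsmul] at hk
        have : Real.pi = 0 := by linarith
        exact Real.pi_ne_zero this
      have key : (k : ℝ) * θ = (mi : ℝ) * (2 * Real.pi) := by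
        have h1 : k • θ = mi • ((2 : ℝ) * Real.pi) := by
          rw [← hm, ← hk, smul_comm]
        simpa [zsmul_eq_mul] using h1
      have keyC : (k : ℂ) * θ = (mi : ℂ) * (2 * Real.pi) := by
        exact_mod_cast congrArg Complex.ofReal key
      have hce : (k : ℂ) * ((θ : ℂ) * Complex.I) = (mi : ℂ) * (2 * (Real.pi : ℂ) * Complex.I) := by
        linear_combination Complex.I * keyC
      have hlk : l ^ (k : ℤ) = 1 := by
        rw [← hexpθ, ← Complex.exp_int_mul, hce, Complex.exp_int_mul,
          Complex.exp_two_pi_mul_I, _root_.one_zpow]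
      have hk1 : l ^ k.natAbs = 1 := by
        rcases Int.natAbs_eq k with he | he
        · rw [he, zpow_natCast] at hlk; exact hlk
        · rw [he, _root_.zpow_neg, zpow_natCast, inv_eq_one] at hlk; exact hlk
      exact hinf k.natAbs (Int.natAbs_pos.mpr hk0) hk1
  -- pick s in S close to τ
  set ε : ℝ := min 1 (1 / (8 * r)) with hε
  have hεpos : 0 < ε := lt_min one_pos (by positivity)
  have hε1 : ε ≤ 1 := min_le_left _ _
  have hε2 : ε ≤ 1 / (8 * r) := min_le_right _ _
  have hτcl := hdense τ
  rw [Metric.mem_closure_iff] at hτcl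
  obtain ⟨s, hsS, hdist⟩ := hτcl ε hεpos
  rw [hS] at hsS
  obtain ⟨m, k2, hmk⟩ := (AddSubgroup.mem_closure_pair).mp hsS
  have hsdist : |s - τ| < ε := by
    rw [Real.dist_eq, abs_sub_comm] at hdist
    exact hdist
  have hexps : Complex.exp ((s : ℂ) * Complex.I) = l ^ m := by
    rw [← hmk]
    have hcast : (((m • θ + k2 • (2 * Real.pi) : ℝ)) : ℂ) * Complex.I
        = (m : ℂ) * ((θ : ℂ) * Complex.I) + (k2 : ℂ) * (2 * (Real.pi : ℂ) * Complex.I) := by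
      push_cast [zsmul_eq_mul]
      ring
    rw [hcast, Complex.exp_add, Complex.exp_int_mul, Complex.exp_int_mul, hexpθ,
      Complex.exp_two_pi_mul_I, _root_.one_zpow, mul_one]
  have h1 : ‖l ^ m - t‖ ≤ 2 * ε := by
    rw [← hexps, ← hexpτ]
    calc ‖Complex.exp ((s : ℂ) * Complex.I) - Complex.exp ((τ : ℂ) * Complex.I)‖
        ≤ 2 * |s - τ| := exp_close s τ (le_trans hsdist.le hε1)
      _ ≤ 2 * ε := by linarith
  -- cluster point argument on the circle
  set lc : Circle := Circle.exp θ with hlc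
  have hlcl : (lc : ℂ) = l := by rw [hlc, Circle.coe_exp, hexpθ]
  have hmc := mapClusterPt_self_zpow_atTop_pow lc m
  rw [mapClusterPt_iff_frequently] at hmc
  obtain ⟨n, hn⟩ := (hmc (Metric.ball (lc ^ m) (1 / (2 * r)))
    (Metric.ball_mem_nhds _ (by positivity))).exists
  have hcoen : ((lc ^ n : Circle) : ℂ) = l ^ n := by
    rw [← hlcl]
    exact map_pow Circle.coeHom lc n
  have hcoem : ((lc ^ m : Circle) : ℂ) = l ^ m := by
    rw [circle_coe_zpow, hlcl]
  have hdist2 : ‖l ^ n - l ^ m‖ < 1 / (2 * r) := by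
    have hball := Metric.mem_ball.mp hn
    rw [show dist (lc ^ n) (lc ^ m) = dist ((lc ^ n : Circle) : ℂ) ((lc ^ m : Circle) : ℂ) from rfl,
      Complex.dist_eq] at hball
    rwa [hcoen, hcoem] at hball
  -- conclude
  refine ⟨n, ?_⟩
  rw [tr n]
  have hre : |(α * l ^ n).re| < 1 := by
    have he1 : (α * l ^ n).re = (α * (l ^ n - t)).re := by
      have : α * (l ^ n - t) = α * l ^ n - α * t := by ring
      rw [this, Complex.sub_re, htre, sub_zero]
    have he2 : |(α * (l ^ n - t)).re| ≤ ‖α * (l ^ n - t)‖ :=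
      Complex.abs_re_le_norm _
    rw [norm_mul] at he2
    have he3 : ‖l ^ n - t‖ < 2 * ε + 1 / (2 * r) := by
      calc ‖l ^ n - t‖ ≤ ‖l ^ n - l ^ m‖ + ‖l ^ m - t‖ := by
            have : l ^ n - t = (l ^ n - l ^ m) + (l ^ m - t) := by ring
            rw [this]; exact norm_add_le _ _
        _ < 1 / (2 * r) + 2 * ε := by exact add_lt_add_of_lt_of_le hdist2 h1
        _ = 2 * ε + 1 / (2 * r) := by ring
    have hfin : r * (2 * ε + 1 / (2 * r)) ≤ 3 / 4 := by
      have h8 : r * (1 / (8 * r)) = 1 / 8 := by field_simp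
      have h2 : r * (1 / (2 * r)) = 1 / 2 := by field_simp
      nlinarith [hε2, hr0]
    rw [he1]
    calc |(α * (l ^ n - t)).re| ≤ ‖α‖ * ‖l ^ n - t‖ := he2
      _ < r * (2 * ε + 1 / (2 * r)) := by
          exact mul_lt_mul_of_pos_left he3 hr0
      _ ≤ 3 / 4 := hfin
      _ < 1 := by norm_num
  have habs2 : ‖(2 * ((α * l ^ n).re : ℝ) : ℂ)‖ = 2 * |(α * l ^ n).re| := by
    rw [show ((2 * ((α * l ^ n).re : ℝ) : ℂ)) = (((2 * (α * l ^ n).re : ℝ)) : ℂ) by push_cast; ring,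
      Complex.norm_real, Real.norm_eq_abs, abs_mul]
    norm_num
  rw [habs2]
  linarith
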